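/- arXiv:2304.13972 — 4 statements merged into one kernel-verified Lean document; each statement's English description precedes it below -/
import Mathlib

section
/- Let f: ℝ^d → ℝ be twice continuously differentiable with ‖∇²f(z)‖ ≤ L₀ + L_ρ ‖∇f(z)‖^ρ for all z, where ρ, L₀, L_ρ ≥ 0. For any a > 0 and points x, y with ‖y − x‖ ≤ a / (L₀ + L_ρ (‖∇f(x)‖ + a)^ρ), one has ‖∇f(y)‖ ≤ ‖∇f(x)‖ + a. -/
open InnerProductSpace Set Filter

/-- Under the `(L₀, L_ρ)` generalized smoothness condition, the gradient norm
increases by at most `a` within radius `a / (L₀ + L_ρ (‖∇f x‖ + a)^ρ)`. -/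
theorem grad_norm_local_bound (d : ℕ) (f : EuclideanSpace ℝ (Fin d) → ℝ)
    (ρ L₀ Lρ : ℝ) (hρ : 0 ≤ ρ) (hL₀ : 0 ≤ L₀) (hLρ : 0 ≤ Lρ)
    (hf : ContDiff ℝ 2 f)
    (hhess : ∀ z, ‖fderiv ℝ (gradient f) z‖ ≤ L₀ + Lρ * ‖gradient f z‖ ^ ρ)
    (a : ℝ) (ha : 0 < a) (x y : EuclideanSpace ℝ (Fin d))
    (hxy : ‖y - x‖ ≤ a / (L₀ + Lρ * (‖gradient f x‖ + a) ^ ρ)) :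
    ‖gradient f y‖ ≤ ‖gradient f x‖ + a := by
  set G := gradient f with hG
  have hGdiff : Differentiable ℝ G := by
    have h1 : Differentiable ℝ (fderiv ℝ f) :=
      (hf.fderiv_right (m := 1) (by norm_num)).differentiable one_ne_zero
    exact fun z =>
      ((toDual ℝ (EuclideanSpace ℝ (Fin d))).symm.differentiable.differentiableAt).comp z (h1 z)
  have hGcont : Continuous G := hGdiff.continuous
  set C : ℝ := ‖G x‖ + a with hCdef
  have hCpos : 0 < C := by positivity
  set L : ℝ := L₀ + Lρ * C ^ ρ with hLdef
  have hLnn : 0 ≤ L := by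
    have : (0:ℝ) ≤ C ^ ρ := Real.rpow_nonneg hCpos.le ρ
    nlinarith
  rcases eq_or_lt_of_le hLnn with hL0 | hLpos
  · -- degenerate case: L = 0, hence y = x
    have hyx : ‖y - x‖ ≤ 0 := by
      have : a / L = 0 := by rw [← hL0, div_zero]
      rw [hLdef, hCdef] at this
      linarith [hxy, this]
    have : y = x := by
      have := le_antisymm hyx (norm_nonneg _)
      rwa [norm_eq_zero, sub_eq_zero] at this
    rw [this]; linarith
  · have hLa : L * ‖y - x‖ ≤ a := by
      have := (le_div_iff₀ hLpos).mp hxy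
      linarith
    set γ : ℝ → EuclideanSpace ℝ (Fin d) := fun t => x + t • (y - x) with hγdef
    have hγ0 : γ 0 = x := by simp [hγdef]
    have hγ1 : γ 1 = y := by simp [hγdef]
    have hγcont : Continuous γ := continuous_const.add (continuous_id.smul continuous_const)
    have hφcont : Continuous (fun t => ‖G (γ t)‖) := (hGcont.comp hγcont).norm
    -- key Lipschitz-type estimate
    have key : ∀ t ∈ Icc (0:ℝ) 1, (∀ s ∈ Icc (0:ℝ) t, ‖G (γ s)‖ ≤ C) →
        ‖G (γ t)‖ ≤ ‖G x‖ + t * a := by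
      intro t ht hbd
      have hseg : ∀ z ∈ segment ℝ x (γ t), ∃ s ∈ Icc (0:ℝ) t, z = γ s := by
        intro z hz
        rw [segment_eq_image'] at hz
        obtain ⟨θ, hθ, hzeq⟩ := hz
        refine ⟨θ * t, ⟨mul_nonneg hθ.1 ht.1, ?_⟩, ?_⟩
        · calc θ * t ≤ 1 * t := mul_le_mul_of_nonneg_right hθ.2 ht.1
            _ = t := one_mul t
        · rw [← hzeq]
          simp only [hγdef]
          rw [add_sub_cancel_left, smul_smul]
      have hbound : ∀ z ∈ segment ℝ x (γ t), ‖fderiv ℝ G z‖ ≤ L := by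
        intro z hz
        obtain ⟨s, hs, rfl⟩ := hseg z hz
        refine (hhess _).trans ?_
        have h1 : ‖G (γ s)‖ ^ ρ ≤ C ^ ρ :=
          Real.rpow_le_rpow (norm_nonneg _) (hbd s hs) hρ
        nlinarith
      have hmvt : ‖G (γ t) - G x‖ ≤ L * ‖γ t - x‖ := by
        have := (convex_segment x (γ t)).norm_image_sub_le_of_norm_fderiv_le
          (fun z _ => hGdiff.differentiableAt) hbound
          (left_mem_segment ℝ x (γ t)) (right_mem_segment ℝ x (γ t))
        simpa using this
      have hdist : ‖γ t - x‖ = t * ‖y - x‖ := by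
        simp only [hγdef, add_sub_cancel_left, norm_smul, Real.norm_eq_abs,
          abs_of_nonneg ht.1]
      have : ‖G (γ t) - G x‖ ≤ t * a := by
        rw [hdist] at hmvt
        calc ‖G (γ t) - G x‖ ≤ L * (t * ‖y - x‖) := hmvt
          _ = t * (L * ‖y - x‖) := by ring
          _ ≤ t * a := mul_le_mul_of_nonneg_left hLa ht.1
      calc ‖G (γ t)‖ ≤ ‖G x‖ + ‖G (γ t) - G x‖ := by
            have := norm_sub_norm_le (G (γ t)) (G x); linarith
        _ ≤ ‖G x‖ + t * a := by linarith
    -- continuous induction via supremum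
    set S : Set ℝ := {t | t ∈ Icc (0:ℝ) 1 ∧ ∀ s ∈ Icc (0:ℝ) t, ‖G (γ s)‖ ≤ C} with hSdef
    have hS0 : (0:ℝ) ∈ S := by
      refine ⟨⟨le_rfl, zero_le_one⟩, ?_⟩
      intro s hs
      have : s = 0 := le_antisymm hs.2 hs.1
      rw [this, hγ0]; linarith
    have hbdd : BddAbove S := ⟨1, fun t ht => ht.1.2⟩
    set τ := sSup S with hτdef
    have hτ0 : 0 ≤ τ := le_csSup hbdd hS0
    have hτ1 : τ ≤ 1 := csSup_le ⟨0, hS0⟩ fun t ht => ht.1.2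
    have hτmem : ∀ s ∈ Icc (0:ℝ) τ, ‖G (γ s)‖ ≤ C := by
      intro s hs
      rcases lt_or_eq_of_le hs.2 with hlt | heq
      · obtain ⟨t, htS, hst⟩ := exists_lt_of_lt_csSup ⟨0, hS0⟩ hlt
        exact htS.2 s ⟨hs.1, hst.le⟩
      · rcases eq_or_lt_of_le hτ0 with hτz | hτpos
        · rw [heq, ← hτz, hγ0]; linarith
        · have htend : Tendsto (fun u => ‖G (γ u)‖) (nhdsWithin τ (Iio τ)) (nhds ‖G (γ τ)‖) :=
            (hφcont.tendsto τ).mono_left nhdsWithin_le_nhds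
          have hev : ∀ᶠ u in nhdsWithin τ (Iio τ), ‖G (γ u)‖ ≤ C := by
            filter_upwards [self_mem_nhdsWithin,
              mem_nhdsWithin_of_mem_nhds (isOpen_Ioi.mem_nhds hτpos)] with u hu1 hu2
            obtain ⟨t, htS, hut⟩ := exists_lt_of_lt_csSup ⟨0, hS0⟩ hu1
            exact htS.2 u ⟨le_of_lt hu2, hut.le⟩
          have := le_of_tendsto htend hev
          rwa [heq]
    have hτeq : τ = 1 := by
      by_contra h
      have hτlt : τ < 1 := lt_of_le_of_ne hτ1 h
      have h1 : ‖G (γ τ)‖ ≤ ‖G x‖ + τ * a := key τ ⟨hτ0, hτ1⟩ hτmem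
      have h2 : ‖G (γ τ)‖ < C := by
        have : τ * a < a := by nlinarith
        rw [hCdef]; linarith
      have hev : ∀ᶠ u in nhds τ, ‖G (γ u)‖ < C :=
        ((hφcont.tendsto τ).eventually_lt_const h2)
      obtain ⟨ε, hεpos, hball⟩ := Metric.eventually_nhds_iff.mp hev
      set t' := min (τ + ε / 2) 1 with ht'def
      have hτt' : τ < t' := lt_min (by linarith) hτlt
      have ht'S : t' ∈ S := by
        refine ⟨⟨le_trans hτ0 hτt'.le, min_le_right _ _⟩, ?_⟩
        intro s hs
        rcases le_or_gt s τ with hsτ | hsτ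
        · exact hτmem s ⟨hs.1, hsτ⟩
        · apply le_of_lt
          apply hball
          rw [Real.dist_eq, abs_of_pos (by linarith)]
          have : s ≤ τ + ε / 2 := le_trans hs.2 (min_le_left _ _)
          linarith
      exact absurd (le_csSup hbdd ht'S) (not_le.mpr hτt')
    have := hτmem 1 ⟨zero_le_one, hτeq.ge⟩
    rwa [hγ1, hCdef] at this
end

section
/- Let f: ℝ^d → ℝ be twice continuously differentiable with ‖∇²f(z)‖ ≤ L₀ + L_ρ ‖∇f(z)‖^ρ for all z, where ρ, L₀, L_ρ ≥ 0. For any a > 0 and points x, y with ‖y − x‖ ≤ a / (L₀ + L_ρ (‖∇f(x)‖ + a)^ρ), one has ‖∇f(y) − ∇f(x)‖ ≤ (L₀ + L_ρ (‖∇f(x)‖ + a)^ρ) · ‖y − x‖. -/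
open Set

/-- Under the `(L₀, L_ρ)` generalized smoothness condition, the gradient is
locally Lipschitz with constant `L₀ + L_ρ (‖∇f x‖ + a)^ρ` within radius
`a / (L₀ + L_ρ (‖∇f x‖ + a)^ρ)`. -/
theorem grad_local_lipschitz (d : ℕ) (f : EuclideanSpace ℝ (Fin d) → ℝ)
    (ρ L₀ Lρ : ℝ) (hρ : 0 ≤ ρ) (hL₀ : 0 ≤ L₀) (hLρ : 0 ≤ Lρ)
    (hf : ContDiff ℝ 2 f)
    (hhess : ∀ z, ‖fderiv ℝ (gradient f) z‖ ≤ L₀ + Lρ * ‖gradient f z‖ ^ ρ)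
    (a : ℝ) (ha : 0 < a) (x y : EuclideanSpace ℝ (Fin d))
    (hxy : ‖y - x‖ ≤ a / (L₀ + Lρ * (‖gradient f x‖ + a) ^ ρ)) :
    ‖gradient f y - gradient f x‖ ≤ (L₀ + Lρ * (‖gradient f x‖ + a) ^ ρ) * ‖y - x‖ := by
  set G := gradient f with hGdef
  -- G is C¹
  have hG1 : ContDiff ℝ 1 G := by
    have h1 : ContDiff ℝ 1 (fderiv ℝ f) := hf.fderiv_right (by norm_num)
    have heq : G = fun z =>
        (InnerProductSpace.toDual ℝ (EuclideanSpace ℝ (Fin d))).symm (fderiv ℝ f z) := rfl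
    rw [heq]
    exact (InnerProductSpace.toDual ℝ (EuclideanSpace ℝ (Fin d))).symm.contDiff.comp h1
  have hGdiff : Differentiable ℝ G := hG1.differentiable one_ne_zero
  have hGcont : Continuous G := hG1.continuous
  set L : ℝ := L₀ + Lρ * (‖G x‖ + a) ^ ρ with hLdef
  have hL : 0 ≤ L := add_nonneg hL₀
    (mul_nonneg hLρ (Real.rpow_nonneg (by positivity) _))
  by_cases hyx : y = x
  · subst hyx; simp
  have hc : 0 < ‖y - x‖ := norm_pos_iff.mpr (sub_ne_zero.mpr hyx)
  rcases hL.eq_or_lt with hL0 | hLpos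
  · exfalso
    rw [← hL0, div_zero] at hxy
    linarith
  set c : ℝ := ‖y - x‖ with hcdef
  have hca : L * c ≤ a := by
    have := (le_div_iff₀ hLpos).mp hxy
    linarith [this]
  set γ : ℝ → EuclideanSpace ℝ (Fin d) := fun t => x + t • (y - x) with hγdef
  have hγcont : Continuous γ := by fun_prop
  have hγ0 : γ 0 = x := by simp [hγdef]
  have hγ1 : γ 1 = y := by simp [hγdef]
  have hγsub : ∀ s : ℝ, γ s - x = s • (y - x) := by intro s; simp [hγdef]
  have hγnorm : ∀ s : ℝ, 0 ≤ s → ‖γ s - x‖ = s * c := by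
    intro s hs
    rw [hγsub, norm_smul, Real.norm_eq_abs, abs_of_nonneg hs]
  -- the key mean value estimate
  have key : ∀ T, T ∈ Icc (0:ℝ) 1 →
      (∀ s ∈ Icc (0:ℝ) T, ‖G (γ s)‖ ≤ ‖G x‖ + a) →
      ∀ s ∈ Icc (0:ℝ) T, ‖G (γ s) - G x‖ ≤ L * (s * c) := by
    intro T hT hb s hs
    set A : Set (EuclideanSpace ℝ (Fin d)) := γ '' Icc 0 s with hAdef
    have hγline : γ = fun t => AffineMap.lineMap x y t := by
      funext t
      simp [hγdef, AffineMap.lineMap_apply]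
      abel
    have hconv : Convex ℝ A := by
      rw [hAdef, hγline]
      exact (convex_Icc 0 s).affine_image (AffineMap.lineMap x y)
    have hbound : ∀ z ∈ A, ‖fderiv ℝ G z‖ ≤ L := by
      rintro z ⟨u, hu, rfl⟩
      have h1 : ‖G (γ u)‖ ≤ ‖G x‖ + a :=
        hb u ⟨hu.1, le_trans hu.2 hs.2⟩
      calc ‖fderiv ℝ G (γ u)‖ ≤ L₀ + Lρ * ‖G (γ u)‖ ^ ρ := hhess _
        _ ≤ L := by
            rw [hLdef]
            have := Real.rpow_le_rpow (norm_nonneg (G (γ u))) h1 hρ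
            nlinarith
    have hxA : x ∈ A := ⟨0, ⟨le_refl 0, hs.1⟩, hγ0⟩
    have hsA : γ s ∈ A := ⟨s, ⟨hs.1, le_refl s⟩, rfl⟩
    have := hconv.norm_image_sub_le_of_norm_hasFDerivWithin_le
      (fun z _ => (hGdiff z).hasFDerivAt.hasFDerivWithinAt) hbound hxA hsA
    calc ‖G (γ s) - G x‖ ≤ L * ‖γ s - x‖ := this
      _ = L * (s * c) := by rw [hγnorm s hs.1]
  -- the bootstrap set
  set S : Set ℝ := {t | t ∈ Icc (0:ℝ) 1 ∧
    ∀ s ∈ Icc (0:ℝ) t, ‖G (γ s) - G x‖ ≤ L * (s * c)} with hSdef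
  have h0S : (0:ℝ) ∈ S := by
    refine ⟨⟨le_refl 0, zero_le_one⟩, ?_⟩
    intro s hs
    have : s = 0 := le_antisymm hs.2 hs.1
    subst this
    simp [hγ0]
  have hSne : S.Nonempty := ⟨0, h0S⟩
  have hSbdd : BddAbove S := ⟨1, fun t ht => ht.1.2⟩
  set T : ℝ := sSup S with hTdef
  have hT0 : 0 ≤ T := le_csSup hSbdd h0S
  have hT1 : T ≤ 1 := csSup_le hSne fun t ht => ht.1.2
  have hlt : ∀ s, 0 ≤ s → s < T → ‖G (γ s) - G x‖ ≤ L * (s * c) := by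
    intro s hs0 hsT
    obtain ⟨t, htS, hst⟩ := exists_lt_of_lt_csSup hSne hsT
    exact htS.2 s ⟨hs0, hst.le⟩
  have hφcont : Continuous fun t => ‖G (γ t) - G x‖ := by fun_prop
  -- T ∈ S
  have hTS : ∀ s ∈ Icc (0:ℝ) T, ‖G (γ s) - G x‖ ≤ L * (s * c) := by
    intro s hs
    rcases lt_or_eq_of_le hs.2 with h | h
    · exact hlt s hs.1 h
    subst h
    rcases hT0.eq_or_lt with h0 | h0
    · rw [← h0]; simp [hγ0]
    -- s = T > 0: pass to the limit from the left
    have htend : Filter.Tendsto (fun t => ‖G (γ t) - G x‖) (nhdsWithin T (Iio T))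
        (nhds ‖G (γ T) - G x‖) := (hφcont.tendsto T).mono_left nhdsWithin_le_nhds
    refine le_of_tendsto htend ?_
    filter_upwards [Ioo_mem_nhdsLT_of_mem (Set.mem_Ioc.mpr ⟨h0, le_refl T⟩)] with u hu
    calc ‖G (γ u) - G x‖ ≤ L * (u * c) := hlt u hu.1.le hu.2
      _ ≤ L * (T * c) :=
          mul_le_mul_of_nonneg_left (mul_le_mul_of_nonneg_right hu.2.le hc.le) hL
  -- T must equal 1
  have hTeq : T = 1 := by
    by_contra hne
    have hTlt : T < 1 := lt_of_le_of_ne hT1 hne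
    have hblt : ∀ s ∈ Icc (0:ℝ) T, ‖G (γ s)‖ < ‖G x‖ + a := by
      intro s hs
      have h1 : ‖G (γ s) - G x‖ ≤ L * (s * c) := hTS s hs
      have h2 : L * (s * c) ≤ a * T := by
        calc L * (s * c) ≤ L * (T * c) :=
              mul_le_mul_of_nonneg_left (mul_le_mul_of_nonneg_right hs.2 hc.le) hL
          _ = (L * c) * T := by ring
          _ ≤ a * T := mul_le_mul_of_nonneg_right hca hT0
      have h3 : a * T < a := by nlinarith
      calc ‖G (γ s)‖ ≤ ‖G x‖ + ‖G (γ s) - G x‖ := by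
            have := norm_add_le (G x) (G (γ s) - G x); simpa using this
        _ < ‖G x‖ + a := by linarith
    have hcoT : ContinuousAt (fun s => ‖G (γ s)‖) T := by fun_prop
    have hnb : {s : ℝ | ‖G (γ s)‖ < ‖G x‖ + a} ∈ nhds T := by
      refine hcoT.preimage_mem_nhds (Iio_mem_nhds ?_)
      exact hblt T ⟨hT0, le_refl T⟩
    obtain ⟨δ, hδ, hball⟩ := Metric.mem_nhds_iff.mp hnb
    set T' : ℝ := min (T + δ/2) 1 with hT'def
    have hTT' : T < T' := lt_min (by linarith) hTlt
    have hT'1 : T' ≤ 1 := min_le_right _ _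
    have hT'0 : 0 ≤ T' := le_trans hT0 hTT'.le
    have hbT' : ∀ s ∈ Icc (0:ℝ) T', ‖G (γ s)‖ ≤ ‖G x‖ + a := by
      intro s hs
      rcases le_or_gt s T with h | h
      · exact (hblt s ⟨hs.1, h⟩).le
      · have : s ∈ Metric.ball T δ := by
          rw [Metric.mem_ball, Real.dist_eq, abs_of_pos (by linarith)]
          have : s ≤ T + δ/2 := le_trans hs.2 (min_le_left _ _)
          linarith
        exact (hball this).le
    have hT'S : T' ∈ S := ⟨⟨hT'0, hT'1⟩, key T' ⟨hT'0, hT'1⟩ hbT'⟩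
    have : T' ≤ T := le_csSup hSbdd hT'S
    linarith
  have := hTS 1 (by rw [hTeq]; exact ⟨zero_le_one, le_refl 1⟩)
  rw [hγ1] at this
  calc ‖G y - G x‖ ≤ L * (1 * c) := this
    _ = L * ‖y - x‖ := by ring
end

section
/- For the double exponential function f(x) = a^{b^x} with a, b > 1 and any fixed ρ > 1, the limit as x → +∞ of |f'(x)|^ρ / |f''(x)| is +∞. Consequently, for any ρ with 1 < ρ < 2 there exist constants L₀, L_ρ ≥ 0 such that |f''(x)| ≤ L₀ + L_ρ|f'(x)|^ρ for all x ∈ ℝ. -/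
open Real Filter

private lemma exp_div_linear_atTop {c : ℝ} (hc : 0 < c) :
    Tendsto (fun u : ℝ => Real.exp (c * u) / u) atTop atTop := by
  have h1 : Tendsto (fun v : ℝ => Real.exp v / v) atTop atTop := by
    simpa using Real.tendsto_exp_div_pow_atTop 1
  have h2 : Tendsto (fun u : ℝ => c * u) atTop atTop :=
    tendsto_id.const_mul_atTop hc
  have h3 : Tendsto (fun u : ℝ => Real.exp (c * u) / (c * u)) atTop atTop := h1.comp h2
  have h4 := h3.const_mul_atTop hc
  refine h4.congr' ?_
  filter_upwards [eventually_gt_atTop 0] with u hu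
  field_simp

/-- For `f x = a^(b^x)` with `a, b > 1` and `ρ > 1`, `|f'|^ρ / |f''| → ∞` as
`x → ∞`; consequently for `1 < ρ < 2` the function is `(L₀,L_ρ)` smooth for
some `L₀, L_ρ ≥ 0`. Here `f' x = log a * log b * b^x * a^(b^x)` and
`f'' x = log b * (log a * b^x + 1) * f' x`. -/
theorem doubleExp_L0Lrho_smooth (a b : ℝ) (ha : 1 < a) (hb : 1 < b) (ρ : ℝ) (hρ : 1 < ρ) :
    Filter.Tendsto
      (fun x : ℝ =>
        |Real.log a * Real.log b * b ^ x * a ^ (b ^ x)| ^ ρ /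
          |Real.log b * (Real.log a * b ^ x + 1) *
            (Real.log a * Real.log b * b ^ x * a ^ (b ^ x))|)
      Filter.atTop Filter.atTop ∧
    (ρ < 2 → ∃ L₀ Lρ : ℝ, 0 ≤ L₀ ∧ 0 ≤ Lρ ∧ ∀ x : ℝ,
      |Real.log b * (Real.log a * b ^ x + 1) *
          (Real.log a * Real.log b * b ^ x * a ^ (b ^ x))| ≤
        L₀ + Lρ * |Real.log a * Real.log b * b ^ x * a ^ (b ^ x)| ^ ρ) := by
  have hb0 : (0:ℝ) < b := lt_trans one_pos hb
  have ha0 : (0:ℝ) < a := lt_trans one_pos ha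
  have hLa : 0 < Real.log a := Real.log_pos ha
  have hLb : 0 < Real.log b := Real.log_pos hb
  set La := Real.log a with hLadef
  set Lb := Real.log b with hLbdef
  have hu0 : ∀ x : ℝ, 0 < b ^ x := fun x => Real.rpow_pos_of_pos hb0 x
  have hf' : ∀ x : ℝ, 0 < La * Lb * b ^ x * a ^ (b ^ x) := by
    intro x
    have := Real.rpow_pos_of_pos ha0 (b ^ x)
    positivity
  have hD : ∀ x : ℝ, 0 < Lb * (La * b ^ x + 1) := by
    intro x
    have := hu0 x
    positivity
  have hf'' : ∀ x : ℝ, 0 < Lb * (La * b ^ x + 1) * (La * Lb * b ^ x * a ^ (b ^ x)) :=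
    fun x => mul_pos (hD x) (hf' x)
  have hρ1 : 0 < ρ - 1 := by linarith
  -- the key tendsto statement
  have h1 : Tendsto
      (fun x : ℝ =>
        |La * Lb * b ^ x * a ^ (b ^ x)| ^ ρ /
          |Lb * (La * b ^ x + 1) * (La * Lb * b ^ x * a ^ (b ^ x))|)
      atTop atTop := by
    set c : ℝ := (ρ - 1) * La with hc
    have hcpos : 0 < c := mul_pos hρ1 hLa
    set K : ℝ := (La * Lb) ^ (ρ - 1) / (Lb * (La + 1)) with hK
    have hKpos : 0 < K := by
      have : 0 < (La * Lb) ^ (ρ - 1) := Real.rpow_pos_of_pos (mul_pos hLa hLb) _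
      positivity
    -- the lower bound function tends to atTop
    have hlow : Tendsto (fun x : ℝ => K * (Real.exp (c * b ^ x) / b ^ x)) atTop atTop := by
      have hbx : Tendsto (fun x : ℝ => b ^ x) atTop atTop := by
        have : Tendsto (fun x : ℝ => Real.exp (Lb * x)) atTop atTop :=
          Real.tendsto_exp_atTop.comp (tendsto_id.const_mul_atTop hLb)
        refine this.congr fun x => ?_
        rw [Real.rpow_def_of_pos hb0]
      exact ((exp_div_linear_atTop hcpos).comp hbx).const_mul_atTop hKpos
    refine tendsto_atTop_mono' _ ?_ hlow
    filter_upwards [eventually_ge_atTop (0:ℝ)] with x hx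
    set u := b ^ x with hu
    have hu1 : (1:ℝ) ≤ u := by
      rw [hu, ← Real.rpow_zero b]
      exact Real.rpow_le_rpow_of_exponent_le hb.le hx
    have hupos : 0 < u := hu0 x
    have haexp : a ^ u = Real.exp (La * u) := Real.rpow_def_of_pos ha0 u
    -- remove absolute values
    rw [abs_of_pos (hf' x), abs_of_pos (hf'' x)]
    -- rewrite the ratio
    have hsplit : (La * Lb * u * a ^ u) ^ ρ = (La * Lb * u * a ^ u) ^ (ρ - 1) * (La * Lb * u * a ^ u) := by
      have h := Real.rpow_add (hf' x) (ρ - 1) 1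
      rw [Real.rpow_one, sub_add_cancel] at h
      exact h
    rw [hsplit, mul_div_mul_right _ _ (ne_of_gt (hf' x))]
    -- now goal: K * (exp (c*u) / u) ≤ f'^(ρ-1) / D
    have hnum : (La * Lb) ^ (ρ - 1) * Real.exp (c * u) ≤ (La * Lb * u * a ^ u) ^ (ρ - 1) := by
      have h1 : La * Lb * Real.exp (La * u) ≤ La * Lb * u * a ^ u := by
        rw [haexp]
        nlinarith [mul_pos (mul_pos hLa hLb) (Real.exp_pos (La * u))]
      calc (La * Lb) ^ (ρ - 1) * Real.exp (c * u)
          = (La * Lb * Real.exp (La * u)) ^ (ρ - 1) := by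
            rw [Real.mul_rpow (mul_pos hLa hLb).le (Real.exp_pos _).le,
              ← Real.exp_mul]
            rw [hc]; ring_nf
        _ ≤ (La * Lb * u * a ^ u) ^ (ρ - 1) :=
            Real.rpow_le_rpow (by positivity) h1 hρ1.le
    have hden : Lb * (La * u + 1) ≤ Lb * (La + 1) * u := by
      nlinarith
    calc K * (Real.exp (c * u) / u)
        = (La * Lb) ^ (ρ - 1) * Real.exp (c * u) / (Lb * (La + 1) * u) := by
          rw [hK]; field_simp
      _ ≤ (La * Lb * u * a ^ u) ^ (ρ - 1) / (Lb * (La * u + 1)) :=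
          div_le_div₀ (by positivity) hnum (hD x) hden
  refine ⟨h1, fun _ => ?_⟩
  -- part 2
  obtain ⟨X, hX⟩ := (h1.eventually_ge_atTop 1).exists_forall_of_atTop
  refine ⟨|Lb * (La * b ^ X + 1) * (La * Lb * b ^ X * a ^ (b ^ X))|, 1,
    abs_nonneg _, zero_le_one, fun x => ?_⟩
  rcases le_total x X with hx | hx
  · have hmono : Lb * (La * b ^ x + 1) * (La * Lb * b ^ x * a ^ (b ^ x)) ≤
        Lb * (La * b ^ X + 1) * (La * Lb * b ^ X * a ^ (b ^ X)) := by
      have hbb : b ^ x ≤ b ^ X := Real.rpow_le_rpow_of_exponent_le hb.le hx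
      have haa : a ^ (b ^ x) ≤ a ^ (b ^ X) := Real.rpow_le_rpow_of_exponent_le ha.le hbb
      have h1 := hu0 x
      have h2 := Real.rpow_pos_of_pos ha0 (b ^ x)
      gcongr <;> positivity
    have := abs_nonneg (La * Lb * b ^ x * a ^ (b ^ x))
    have hrn : 0 ≤ |La * Lb * b ^ x * a ^ (b ^ x)| ^ ρ := Real.rpow_nonneg this ρ
    rw [abs_of_pos (hf'' x)]
    calc Lb * (La * b ^ x + 1) * (La * Lb * b ^ x * a ^ (b ^ x))
        ≤ Lb * (La * b ^ X + 1) * (La * Lb * b ^ X * a ^ (b ^ X)) := hmono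
      _ ≤ |Lb * (La * b ^ X + 1) * (La * Lb * b ^ X * a ^ (b ^ X))| := le_abs_self _
      _ ≤ _ := by linarith
  · have hge := hX x hx
    have habs : 0 < |Lb * (La * b ^ x + 1) * (La * Lb * b ^ x * a ^ (b ^ x))| :=
      abs_pos.mpr (ne_of_gt (hf'' x))
    rw [le_div_iff₀ habs, one_mul] at hge
    have := abs_nonneg (Lb * (La * b ^ X + 1) * (La * Lb * b ^ X * a ^ (b ^ X)))
    linarith
end

section
/- Let β ∈ (0,1] and define α_t = β / (1 − (1−β)^t) for integers t ≥ 1. Then for all T ≥ 2, Σ_{t=2}^{T} α_t² ≤ 3(1 + β² T). -/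
open Finset

/-- For `t ≥ 2` with `β t ≤ 1`, `(1-β)^t ≤ 1 - βt/2`. -/
lemma pow_bound_aux (β : ℝ) (hβ0 : 0 < β) (hβ1 : β ≤ 1) :
    ∀ t : ℕ, 2 ≤ t → (β * t ≤ 1 → (1 - β) ^ t ≤ 1 - β * t / 2) := by
  intro t ht
  induction t, ht using Nat.le_induction with
  | base => intro h; push_cast at h ⊢; nlinarith
  | succ n hn ih =>
    intro h
    have hn1 : β * n ≤ 1 := by
      push_cast at h ⊢
      nlinarith
    have hih := ih hn1
    have h1β : (0:ℝ) ≤ 1 - β := by linarith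
    have hps : (1 - β) ^ (n+1) = (1 - β) ^ n * (1 - β) := pow_succ _ _
    have := mul_le_mul_of_nonneg_right hih h1β
    push_cast
    push_cast at hn1 hih this
    nlinarith

/-- If `β t > 1` then `(1-β)^t ≤ 10/27`. -/
lemma pow_small (β : ℝ) (hβ0 : 0 < β) (hβ1 : β ≤ 1) (t : ℕ) (h : 1 < β * t) :
    (1 - β) ^ t ≤ 10 / 27 := by
  have h1β : (0:ℝ) ≤ 1 - β := by linarith
  have h1 : (1 - β : ℝ) ≤ Real.exp (-β) := by
    have := Real.add_one_le_exp (-β); linarith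
  have h2 : (1 - β) ^ t ≤ Real.exp (-β) ^ t := pow_le_pow_left₀ h1β h1 t
  have h3 : Real.exp (-β) ^ t = Real.exp (-(β * t)) := by
    rw [← Real.exp_nat_mul]; ring_nf
  have h4 : Real.exp (-(β * t)) ≤ Real.exp (-1) := by
    apply Real.exp_le_exp.mpr; linarith
  have h5 : Real.exp (-1) ≤ 10 / 27 := by
    rw [Real.exp_neg]
    have h27 : (27/10:ℝ) ≤ Real.exp 1 := by nlinarith [Real.exp_one_gt_d9]
    have : ((27:ℝ)/10)⁻¹ = 10/27 := by norm_num
    rw [← this]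
    gcongr
  calc (1 - β) ^ t ≤ Real.exp (-β) ^ t := h2
    _ = Real.exp (-(β * t)) := h3
    _ ≤ 10 / 27 := by linarith

/-- Pointwise bound. -/
lemma alpha_sq_bound (β : ℝ) (hβ0 : 0 < β) (hβ1 : β ≤ 1) (t : ℕ) (ht : 2 ≤ t) :
    (β / (1 - (1 - β) ^ t)) ^ 2 ≤ 4 / ((t:ℝ)^2 - 1) + 3 * β ^ 2 := by
  have htR : (2:ℝ) ≤ t := by exact_mod_cast ht
  have ht0 : (0:ℝ) < t := by linarith
  rcases le_or_gt (β * t) 1 with hc | hc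
  · -- β t ≤ 1 : denominator ≥ β t / 2
    have hD : β * t / 2 ≤ 1 - (1 - β) ^ t := by
      have := pow_bound_aux β hβ0 hβ1 t ht hc; linarith
    have hDpos : (0:ℝ) < β * t / 2 := by positivity
    have hα : β / (1 - (1 - β) ^ t) ≤ 2 / t := by
      rw [div_le_div_iff₀ (by linarith) ht0]
      have : β * t ≤ (1 - (1 - β) ^ t) * 2 := by linarith
      linarith
    have hαpos : (0:ℝ) ≤ β / (1 - (1 - β) ^ t) := by
      apply div_nonneg hβ0.le; linarith
    have h1 : (β / (1 - (1 - β) ^ t)) ^ 2 ≤ (2 / t)^2 := by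
      apply pow_le_pow_left₀ hαpos hα
    have h2 : (2 / (t:ℝ))^2 ≤ 4 / ((t:ℝ)^2 - 1) := by
      rw [div_pow, div_le_div_iff₀ (by positivity) (by nlinarith)]
      nlinarith
    nlinarith [sq_nonneg β]
  · -- β t > 1 : (1-β)^t ≤ 10/27
    have hp := pow_small β hβ0 hβ1 t hc
    have hD : (17:ℝ)/27 ≤ 1 - (1 - β) ^ t := by linarith
    have hα : β / (1 - (1 - β) ^ t) ≤ 27 * β / 17 := by
      rw [div_le_div_iff₀ (by linarith) (by norm_num)]
      nlinarith
    have hαpos : (0:ℝ) ≤ β / (1 - (1 - β) ^ t) := by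
      apply div_nonneg hβ0.le; linarith
    have h1 : (β / (1 - (1 - β) ^ t)) ^ 2 ≤ (27 * β / 17)^2 :=
      pow_le_pow_left₀ hαpos hα 2
    have h2 : (0:ℝ) ≤ 4 / ((t:ℝ)^2 - 1) := by
      apply div_nonneg (by norm_num); nlinarith
    nlinarith [sq_nonneg β]

/-- Telescoping sum bound. -/
lemma telescope_sum : ∀ T : ℕ, 2 ≤ T →
    ∑ t ∈ Finset.Icc 2 T, (4 / ((t:ℝ)^2 - 1)) = 3 - 2 / (T:ℝ) - 2 / ((T:ℝ) + 1) := by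
  intro T hT
  induction T, hT using Nat.le_induction with
  | base => norm_num [Finset.Icc_self]
  | succ n hn ih =>
    rw [Finset.sum_Icc_succ_top (by omega : 2 ≤ n + 1), ih]
    have hn0 : (0:ℝ) < n := by exact_mod_cast Nat.lt_of_lt_of_le (by norm_num) hn
    have d1 : (n:ℝ) ≠ 0 := ne_of_gt hn0
    have d2 : (n:ℝ) + 1 ≠ 0 := by positivity
    have d3 : (n:ℝ) + 2 ≠ 0 := by positivity
    have e1 : ((n:ℝ)+1)^2 - 1 = n * (n+2) := by ring
    push_cast
    rw [e1]
    field_simp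
    ring

/-- Bound on the sum of squared re-scaled momentum coefficients:
`Σ_{t=2}^T (β / (1 - (1-β)^t))² ≤ 3 (1 + β² T)`. -/
theorem sum_alpha_sq_le (β : ℝ) (hβ0 : 0 < β) (hβ1 : β ≤ 1) (T : ℕ) (hT : 2 ≤ T) :
    ∑ t ∈ Finset.Icc 2 T, (β / (1 - (1 - β) ^ t)) ^ 2 ≤ 3 * (1 + β ^ 2 * T) := by
  have h1 : ∑ t ∈ Finset.Icc 2 T, (β / (1 - (1 - β) ^ t)) ^ 2
      ≤ ∑ t ∈ Finset.Icc 2 T, (4 / ((t:ℝ)^2 - 1) + 3 * β ^ 2) := by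
    apply Finset.sum_le_sum
    intro t htm
    exact alpha_sq_bound β hβ0 hβ1 t (Finset.mem_Icc.mp htm).1
  rw [Finset.sum_add_distrib, Finset.sum_const, nsmul_eq_mul, telescope_sum T hT] at h1
  have hcard : (Finset.Icc 2 T).card = T - 1 := by
    rw [Nat.card_Icc]; omega
  rw [hcard] at h1
  have hTR : (2:ℝ) ≤ T := by exact_mod_cast hT
  have hc : ((T - 1 : ℕ) : ℝ) = (T:ℝ) - 1 := by
    have : 1 ≤ T := by omega
    push_cast [this]; ring
  rw [hc] at h1
  have h2 : (0:ℝ) < 2 / T := by positivity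
  have h3 : (0:ℝ) < 2 / (T + 1) := by positivity
  nlinarith [sq_nonneg β]
end
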